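/- arXiv:2605.04053 — 2 statements merged into one kernel-verified Lean document; each statement's English description precedes it below -/
import Mathlib

section
/- Let R = S × T be a direct product of rings. If R is a strongly right C4*-ring, then both S and T are strongly right C4*-rings. -/
open MulOpposite

section C4Defs

/-- A submodule is a direct summand if it has a complement. -/
def IsDirectSummand {R M : Type*} [Ring R] [AddCommGroup M] [Module R M]
    (A : Submodule R M) : Prop :=
  ∃ B : Submodule R M, IsCompl A B

/-- `M` is a `C4`-module over `R`: for every internal direct sum decomposition `M = A ⊕ B`
and every homomorphism `f : A → B` whose kernel is a direct summand of `A`, the image of `f`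
is a direct summand of `B`. -/
def IsC4Module (R M : Type*) [Ring R] [AddCommGroup M] [Module R M] : Prop :=
  ∀ A B : Submodule R M, IsCompl A B → ∀ f : A →ₗ[R] B,
    IsDirectSummand (LinearMap.ker f) → IsDirectSummand (LinearMap.range f)

/-- `M` is a `C4*`-module: every submodule of `M` is a `C4`-module. -/
def IsC4StarModule (R M : Type*) [Ring R] [AddCommGroup M] [Module R M] : Prop :=
  ∀ N : Submodule R M, IsC4Module R N

/-- `M` is square-free: no nonzero submodules `A`, `B` with `A ⊓ B = ⊥` and `A ≅ B`. -/
def IsSquareFreeModule (R M : Type*) [Ring R] [AddCommGroup M] [Module R M] : Prop :=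
  ∀ A B : Submodule R M, A ≠ ⊥ → B ≠ ⊥ → A ⊓ B = ⊥ → IsEmpty (A ≃ₗ[R] B)

/-- `M` is summand-square-free: no nonzero direct summands `A`, `B` with `A ⊓ B = ⊥`
and `A ≅ B`. -/
def IsSummandSquareFree (R M : Type*) [Ring R] [AddCommGroup M] [Module R M] : Prop :=
  ∀ A B : Submodule R M, IsDirectSummand A → IsDirectSummand B →
    A ≠ ⊥ → B ≠ ⊥ → A ⊓ B = ⊥ → IsEmpty (A ≃ₗ[R] B)

/-- `X` is an essential submodule of `A`. -/
def IsEssentialIn {R M : Type*} [Ring R] [AddCommGroup M] [Module R M]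
    (X A : Submodule R M) : Prop :=
  X ≤ A ∧ ∀ N : Submodule R M, N ≤ A → N ≠ ⊥ → X ⊓ N ≠ ⊥

/-- A triple `(X, Y, f)` where `X`, `Y` are semisimple direct summands of `M` with
`X ⊓ Y = ⊥` and `f : X ≅ Y` an isomorphism.  These are the elements of the poset `S(M)`
from the definition of semi-weak-CS modules. -/
structure SWTriple (R M : Type*) [Ring R] [AddCommGroup M] [Module R M] where
  X : Submodule R M
  Y : Submodule R M
  semisimpleX : IsSemisimpleModule R X
  semisimpleY : IsSemisimpleModule R Y
  summandX : IsDirectSummand X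
  summandY : IsDirectSummand Y
  disj : X ⊓ Y = ⊥
  f : X ≃ₗ[R] Y

/-- The extension order on the poset `S(M)` of triples: `(X₁,Y₁,f₁) ≤ (X₂,Y₂,f₂)` iff
`X₁ ≤ X₂`, `Y₁ ≤ Y₂` and `f₂` restricts to `f₁` on `X₁`. -/
def SWTriple.Extends {R M : Type*} [Ring R] [AddCommGroup M] [Module R M]
    (t s : SWTriple R M) : Prop :=
  ∃ hX : t.X ≤ s.X, t.Y ≤ s.Y ∧
    ∀ x : t.X, (s.f ⟨x.1, hX x.2⟩ : M) = (t.f x : M)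

/-- `M` is semi-weak-CS: for every chain in the poset `S(M)`, with `X` the union of the first
components and `Y` the union of the second components, there are direct summands `A`, `B`
of `M` with `X` essential in `A` and `Y` essential in `B`. -/
def IsSemiWeakCS (R M : Type*) [Ring R] [AddCommGroup M] [Module R M] : Prop :=
  ∀ C : Set (SWTriple R M), IsChain SWTriple.Extends C →
    ∃ A B : Submodule R M, IsDirectSummand A ∧ IsDirectSummand B ∧
      IsEssentialIn (⨆ t ∈ C, t.X) A ∧ IsEssentialIn (⨆ t ∈ C, t.Y) B

/-- `M` is strongly `C4*` if it is both semi-weak-CS and `C4*`. -/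
def IsStronglyC4StarModule (R M : Type*) [Ring R] [AddCommGroup M] [Module R M] : Prop :=
  IsSemiWeakCS R M ∧ IsC4StarModule R M

/-- `R` is a right `C4*`-ring: the right regular module `R_R` (i.e. `R` as a module over
`Rᵐᵒᵖ`) is a `C4*`-module. -/
def IsRightC4StarRing (R : Type*) [Ring R] : Prop := IsC4StarModule Rᵐᵒᵖ R

/-- `R` is a left `C4*`-ring: the left regular module `_RR` is a `C4*`-module. -/
def IsLeftC4StarRing (R : Type*) [Ring R] : Prop := IsC4StarModule R R

/-- `R` is a strongly right `C4*`-ring. -/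
def IsStronglyRightC4StarRing (R : Type*) [Ring R] : Prop := IsStronglyC4StarModule Rᵐᵒᵖ R

/-- `R` is a strongly left `C4*`-ring. -/
def IsStronglyLeftC4StarRing (R : Type*) [Ring R] : Prop := IsStronglyC4StarModule R R

/-- `R` is right semi-weak-CS. -/
def IsRightSemiWeakCSRing (R : Type*) [Ring R] : Prop := IsSemiWeakCS Rᵐᵒᵖ R

/-- `R` is left semi-weak-CS. -/
def IsLeftSemiWeakCSRing (R : Type*) [Ring R] : Prop := IsSemiWeakCS R R

/-- The left square-free transfer condition `LSF`: if the right regular module `T_T` is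
summand-square-free then the left regular module `_TT` is square-free. -/
def LSF (T : Type*) [Ring T] : Prop :=
  IsSummandSquareFree Tᵐᵒᵖ T → IsSquareFreeModule T T

end C4Defs

section Corner

variable {T : Type*} [Ring T]

/-- The corner `eTe = {x : T | e * x = x ∧ x * e = x}` as a non-unital subring. -/
def cornerSubring (e : T) : NonUnitalSubring T where
  carrier := {x : T | e * x = x ∧ x * e = x}
  add_mem' := by
    rintro a b ⟨ha1, ha2⟩ ⟨hb1, hb2⟩
    exact ⟨by rw [mul_add, ha1, hb1], by rw [add_mul, ha2, hb2]⟩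
  zero_mem' := ⟨mul_zero e, zero_mul e⟩
  neg_mem' := by
    rintro a ⟨ha1, ha2⟩
    exact ⟨by rw [mul_neg, ha1], by rw [neg_mul, ha2]⟩
  mul_mem' := by
    rintro a b ⟨ha1, ha2⟩ ⟨hb1, hb2⟩
    exact ⟨by rw [← mul_assoc, ha1], by rw [mul_assoc, hb2]⟩

theorem mem_cornerSubring {e x : T} :
    x ∈ cornerSubring e ↔ e * x = x ∧ x * e = x := Iff.rfl

/-- The corner ring `eTe` associated to an idempotent `e` of `T`; its identity is `e`. -/
def Corner (e : T) (he : IsIdempotentElem e) : Type _ := ↥(cornerSubring e)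

instance {e : T} {he : IsIdempotentElem e} : Ring (Corner e he) :=
  { (inferInstance : NonUnitalRing ↥(cornerSubring e)) with
    one := ⟨e, he, he⟩
    one_mul := fun x => Subtype.ext (mem_cornerSubring.mp x.2).1
    mul_one := fun x => Subtype.ext (mem_cornerSubring.mp x.2).2 }

/-- `eT = {x : T | e * x = x}` as an additive subgroup; it is a left module over the
corner ring `eTe`. -/
def leftPart (e : T) : AddSubgroup T where
  carrier := {x : T | e * x = x}
  add_mem' := by
    intro a b ha hb
    simp only [Set.mem_setOf_eq] at *
    rw [mul_add, ha, hb]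
  zero_mem' := mul_zero e
  neg_mem' := by
    intro a ha
    simp only [Set.mem_setOf_eq] at *
    rw [mul_neg, ha]

/-- `Te = {x : T | x * e = x}` as an additive subgroup; it is a right module over the
corner ring `eTe`. -/
def rightPart (e : T) : AddSubgroup T where
  carrier := {x : T | x * e = x}
  add_mem' := by
    intro a b ha hb
    simp only [Set.mem_setOf_eq] at *
    rw [add_mul, ha, hb]
  zero_mem' := zero_mul e
  neg_mem' := by
    intro a ha
    simp only [Set.mem_setOf_eq] at *
    rw [neg_mul, ha]

theorem mem_leftPart {e x : T} : x ∈ leftPart e ↔ e * x = x := Iff.rfl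

theorem mem_rightPart {e x : T} : x ∈ rightPart e ↔ x * e = x := Iff.rfl

/-- `eT` is a (unital) left module over the corner ring `eTe`. -/
instance {e : T} {he : IsIdempotentElem e} : Module (Corner e he) ↥(leftPart e) where
  smul c x := ⟨c.1 * x.1, by
    have h1 : e * c.1 = c.1 := (mem_cornerSubring.mp c.2).1
    show e * (c.1 * x.1) = c.1 * x.1
    rw [← mul_assoc, h1]⟩
  one_smul x := Subtype.ext (by
    show e * x.1 = x.1
    exact mem_leftPart.mp x.2)
  mul_smul a b x := Subtype.ext (by
    show (a.1 * b.1) * x.1 = a.1 * (b.1 * x.1)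
    rw [mul_assoc])
  smul_zero a := Subtype.ext (by
    show a.1 * 0 = 0
    exact mul_zero _)
  smul_add a x y := Subtype.ext (by
    show a.1 * (x.1 + y.1) = a.1 * x.1 + a.1 * y.1
    exact mul_add _ _ _)
  add_smul a b x := Subtype.ext (by
    show (a.1 + b.1) * x.1 = a.1 * x.1 + b.1 * x.1
    exact add_mul _ _ _)
  zero_smul x := Subtype.ext (by
    show (0 : T) * x.1 = 0
    exact zero_mul _)

/-- `Te` is a (unital) right module over the corner ring `eTe`, i.e. a module over
`(eTe)ᵐᵒᵖ`. -/
instance {e : T} {he : IsIdempotentElem e} : Module (Corner e he)ᵐᵒᵖ ↥(rightPart e) where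
  smul c x := ⟨x.1 * (unop c).1, by
    have h2 : (unop c).1 * e = (unop c).1 := (mem_cornerSubring.mp (unop c).2).2
    show (x.1 * (unop c).1) * e = x.1 * (unop c).1
    rw [mul_assoc, h2]⟩
  one_smul x := Subtype.ext (by
    show x.1 * e = x.1
    exact mem_rightPart.mp x.2)
  mul_smul a b x := Subtype.ext (by
    show x.1 * ((unop b).1 * (unop a).1) = (x.1 * (unop b).1) * (unop a).1
    rw [mul_assoc])
  smul_zero a := Subtype.ext (by
    show (0 : T) * (unop a).1 = 0
    exact zero_mul _)
  smul_add a x y := Subtype.ext (by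
    show (x.1 + y.1) * (unop a).1 = x.1 * (unop a).1 + y.1 * (unop a).1
    exact add_mul _ _ _)
  add_smul a b x := Subtype.ext (by
    show x.1 * ((unop a).1 + (unop b).1) = x.1 * (unop a).1 + x.1 * (unop b).1
    exact mul_add _ _ _)
  zero_smul x := Subtype.ext (by
    show x.1 * (0 : T) = 0
    exact mul_zero _)

/-- The hereditary side-transfer condition `HST`: for every idempotent `e` of `T`, if the
module `eT`/`Te` is summand-square-free as a right `eTe`-module (formalized on the carrier
`Te = rightPart e`, which carries the unital right `eTe`-action; at `e = 1` this is the right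
regular module `T_T`), then the left `eTe`-module (carrier `eT = leftPart e`, carrying the
unital left `eTe`-action; at `e = 1` this is the left regular module `_TT`) is square-free. -/
def HST (T : Type*) [Ring T] : Prop :=
  ∀ (e : T) (he : IsIdempotentElem e),
    IsSummandSquareFree (Corner e he)ᵐᵒᵖ ↥(rightPart e) →
      IsSquareFreeModule (Corner e he) ↥(leftPart e)

/-- The corner-stability axiom `CSA`: for every idempotent `e` of `T`, the left regular
module of the corner ring `eTe` is semi-weak-CS. -/
def CSAxiom (T : Type*) [Ring T] : Prop :=
  ∀ (e : T) (he : IsIdempotentElem e),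
    IsSemiWeakCS (Corner e he) (Corner e he)

end Corner

section SymmetryDatum

/-- A right-to-left symmetry datum on `R`: a ring decomposition `R ≅ S × T` where `S` is
semisimple artinian, the right regular module `T_T` is summand-square-free, the two ideals
`S`, `T` are orthogonal as right `R`-modules (no nonzero isomorphic right `R`-submodules),
and `T` satisfies `HST` and `CSA`. -/
structure RightToLeftSymmetryDatum (R S T : Type*) [Ring R] [Ring S] [Ring T] where
  iso : R ≃+* S × T
  semisimpleArtinian : IsSemisimpleRing S
  ssf : IsSummandSquareFree Tᵐᵒᵖ T
  orthogonal : ∀ A B : Submodule Rᵐᵒᵖ R,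
    (∀ a ∈ A, (iso a).2 = 0) → (∀ b ∈ B, (iso b).1 = 0) →
    A ≠ ⊥ → B ≠ ⊥ → IsEmpty (A ≃ₗ[Rᵐᵒᵖ] B)
  hst : HST T
  csa : CSAxiom T

end SymmetryDatum

section Beta

variable (R : Type*) [Ring R]

/-- The right annihilator `r_R(P) = {s : R | P s = 0}` of a right submodule `P` of `R`. -/
def rightAnnSet (P : Submodule Rᵐᵒᵖ R) : Set R := {s : R | ∀ p ∈ P, p * s = 0}

/-- The annihilator-bidual `β_r(P) = ℓ_R(r_R(P))`, as a right ideal of `R`. -/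
def betaR (P : Submodule Rᵐᵒᵖ R) : Submodule Rᵐᵒᵖ R where
  carrier := {r : R | ∀ s ∈ rightAnnSet R P, r * s = 0}
  add_mem' := by
    intro a b ha hb
    intro s hs
    rw [add_mul, ha s hs, hb s hs, add_zero]
  zero_mem' := by
    intro s hs
    exact zero_mul s
  smul_mem' := by
    intro c x hx s hs
    show (x * unop c) * s = 0
    rw [mul_assoc]
    refine hx _ ?_
    intro p hp
    rw [← mul_assoc]
    exact hs (p * unop c) (Submodule.smul_mem P c hp)

/-- A right ideal is a two-sided ideal which is a ring direct summand of `R` iff it is of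
the form `cR` for a central idempotent `c`. -/
def IsRingDirectSummandIdeal {R : Type*} [Ring R] (I : Submodule Rᵐᵒᵖ R) : Prop :=
  ∃ c : R, IsIdempotentElem c ∧ (∀ r : R, c * r = r * c) ∧ (∀ x : R, x ∈ I ↔ c * x = x)

/-- `R` has right semisimple annihilator asymmetry. -/
def HasRightSemisimpleAnnihilatorAsymmetry (R : Type*) [Ring R] : Prop :=
  ∃ P : Submodule Rᵐᵒᵖ R, IsSemisimpleModule Rᵐᵒᵖ P ∧ IsDirectSummand P ∧
    (¬ IsSemisimpleModule Rᵐᵒᵖ (betaR R P) ∨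
     (IsSemisimpleModule Rᵐᵒᵖ (betaR R P) ∧ ¬ IsRingDirectSummandIdeal (betaR R P)) ∨
     ¬ IsEssentialIn P (betaR R P))

end Beta

section TransferMachinery

/-- A transfer datum between a module `M₁` over `R₁` and a module `M₂` over `R₂`:
an additive equivalence together with scalar correspondences compatible with it. -/
structure ModTransfer (R₁ M₁ R₂ M₂ : Type*) [Ring R₁] [AddCommGroup M₁] [Module R₁ M₁]
    [Ring R₂] [AddCommGroup M₂] [Module R₂ M₂] where
  ε : M₁ ≃+ M₂
  σ : R₂ → R₁
  τ : R₁ → R₂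
  hσ : ∀ (r : R₂) (m : M₁), r • ε m = ε (σ r • m)
  hτ : ∀ (x : R₁) (m : M₁), ε (x • m) = τ x • ε m

namespace ModTransfer

variable {R₁ M₁ R₂ M₂ : Type*} [Ring R₁] [AddCommGroup M₁] [Module R₁ M₁]
    [Ring R₂] [AddCommGroup M₂] [Module R₂ M₂]
variable (D : ModTransfer R₁ M₁ R₂ M₂)

theorem hσ' (r : R₂) (m : M₂) : D.ε.symm (r • m) = D.σ r • D.ε.symm m := by
  have h := D.hσ r (D.ε.symm m)
  rw [D.ε.apply_symm_apply] at h
  rw [h, D.ε.symm_apply_apply]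

theorem hτ' (x : R₁) (m : M₂) : D.ε.symm (τ D x • m) = x • D.ε.symm m := by
  have h := D.hτ x (D.ε.symm m)
  rw [D.ε.apply_symm_apply] at h
  rw [← h, D.ε.symm_apply_apply]

/-- The inverse transfer datum. -/
def symm : ModTransfer R₂ M₂ R₁ M₁ where
  ε := D.ε.symm
  σ := D.τ
  τ := D.σ
  hσ := fun x m => (D.hτ' x m).symm
  hτ := fun r m => D.hσ' r m

/-- The image of a submodule under the transfer. -/
def smapFun (N : Submodule R₁ M₁) : Submodule R₂ M₂ where
  carrier := D.ε.symm ⁻¹' N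
  add_mem' := by
    intro a b ha hb
    simp only [Set.mem_preimage, map_add, SetLike.mem_coe] at *
    exact N.add_mem ha hb
  zero_mem' := by simp
  smul_mem' := by
    intro r x hx
    simp only [Set.mem_preimage, SetLike.mem_coe] at *
    rw [D.hσ']
    exact N.smul_mem _ hx

theorem mem_smapFun {N : Submodule R₁ M₁} {x : M₂} : x ∈ D.smapFun N ↔ D.ε.symm x ∈ N :=
  Iff.rfl

theorem mem_symm_smapFun {K : Submodule R₂ M₂} {x : M₁} :
    x ∈ D.symm.smapFun K ↔ D.ε x ∈ K := Iff.rfl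

/-- The induced order isomorphism on submodule lattices. -/
def smap : Submodule R₁ M₁ ≃o Submodule R₂ M₂ where
  toFun := D.smapFun
  invFun := D.symm.smapFun
  left_inv N := by
    ext x
    rw [D.mem_symm_smapFun, D.mem_smapFun, D.ε.symm_apply_apply]
  right_inv K := by
    ext x
    rw [D.mem_smapFun, D.mem_symm_smapFun, D.ε.apply_symm_apply]
  map_rel_iff' := by
    intro N N'
    show D.smapFun N ≤ D.smapFun N' ↔ N ≤ N'
    constructor
    · intro h x hx
      have hx' : D.ε x ∈ D.smapFun N := by
        rw [D.mem_smapFun, D.ε.symm_apply_apply]; exact hx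
      have h2 : D.ε x ∈ D.smapFun N' := h hx'
      rw [D.mem_smapFun, D.ε.symm_apply_apply] at h2
      exact h2
    · intro h x hx
      exact h hx

theorem mem_smap {N : Submodule R₁ M₁} {x : M₂} : x ∈ D.smap N ↔ D.ε.symm x ∈ N := Iff.rfl

theorem mem_smap' {N : Submodule R₁ M₁} {m : M₁} : D.ε m ∈ D.smap N ↔ m ∈ N := by
  rw [mem_smap, D.ε.symm_apply_apply]

/-- The restriction of the transfer datum to a submodule and its image. -/
def restrict (N : Submodule R₁ M₁) : ModTransfer R₁ ↥N R₂ ↥(D.smap N) where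
  ε :=
    { toFun := fun x => ⟨D.ε x.1, D.mem_smap'.mpr x.2⟩
      invFun := fun y => ⟨D.ε.symm y.1, y.2⟩
      left_inv := fun x => Subtype.ext (D.ε.symm_apply_apply x.1)
      right_inv := fun y => Subtype.ext (D.ε.apply_symm_apply y.1)
      map_add' := fun x y => Subtype.ext (D.ε.map_add x.1 y.1) }
  σ := D.σ
  τ := D.τ
  hσ := fun r m => Subtype.ext (D.hσ r m.1)
  hτ := fun x m => Subtype.ext (D.hτ x m.1)

theorem isDirectSummand_smap_iff {N : Submodule R₁ M₁} :
    IsDirectSummand (D.smap N) ↔ IsDirectSummand N := by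
  constructor
  · rintro ⟨K, hK⟩
    refine ⟨D.smap.symm K, ?_⟩
    have := D.smap.symm.isCompl hK
    rwa [OrderIso.symm_apply_apply] at this
  · rintro ⟨K, hK⟩
    exact ⟨D.smap K, D.smap.isCompl hK⟩

theorem isSemisimple (D : ModTransfer R₁ M₁ R₂ M₂) (h : IsSemisimpleModule R₂ M₂) : IsSemisimpleModule R₁ M₁ := by
  haveI := h
  exact (isSemisimpleModule_iff R₁ M₁).mpr (OrderIso.complementedLattice D.smap.symm)

/-- Conjugation of a linear map between submodules by the transfer. -/
def conj {N₁ N₂ : Submodule R₁ M₁} (f : ↥N₁ →ₗ[R₁] ↥N₂) :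
    ↥(D.smap N₁) →ₗ[R₂] ↥(D.smap N₂) where
  toFun x := (D.restrict N₂).ε (f ((D.restrict N₁).ε.symm x))
  map_add' x y := by simp only [map_add]
  map_smul' r x := by
    simp only [RingHom.id_apply]
    rw [(D.restrict N₁).hσ', map_smul]
    exact ((D.restrict N₂).hσ r (f ((D.restrict N₁).ε.symm x))).symm

theorem conj_apply {N₁ N₂ : Submodule R₁ M₁} (f : ↥N₁ →ₗ[R₁] ↥N₂) (x : ↥(D.smap N₁)) :
    D.conj f x = (D.restrict N₂).ε (f ((D.restrict N₁).ε.symm x)) := rfl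

theorem ker_conj {N₁ N₂ : Submodule R₁ M₁} (f : ↥N₁ →ₗ[R₁] ↥N₂) :
    LinearMap.ker (D.conj f) = (D.restrict N₁).smap (LinearMap.ker f) := by
  ext x
  rw [LinearMap.mem_ker, (D.restrict N₁).mem_smap, LinearMap.mem_ker, conj_apply,
    AddEquivClass.map_eq_zero_iff]

theorem range_conj {N₁ N₂ : Submodule R₁ M₁} (f : ↥N₁ →ₗ[R₁] ↥N₂) :
    LinearMap.range (D.conj f) = (D.restrict N₂).smap (LinearMap.range f) := by
  ext y
  simp only [LinearMap.mem_range, (D.restrict N₂).mem_smap, conj_apply]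
  constructor
  · rintro ⟨x, rfl⟩
    exact ⟨(D.restrict N₁).ε.symm x, by rw [(D.restrict N₂).ε.symm_apply_apply]⟩
  · rintro ⟨u, hu⟩
    refine ⟨(D.restrict N₁).ε u, ?_⟩
    rw [(D.restrict N₁).ε.symm_apply_apply, hu, (D.restrict N₂).ε.apply_symm_apply]

theorem isC4Module (D : ModTransfer R₁ M₁ R₂ M₂) (h : IsC4Module R₂ M₂) : IsC4Module R₁ M₁ := by
  intro A B hAB f hker
  have h2 := h (D.smap A) (D.smap B) (D.smap.isCompl hAB) (D.conj f)
    (by rw [D.ker_conj]; exact ((D.restrict A).isDirectSummand_smap_iff).mpr hker)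
  rw [D.range_conj] at h2
  exact ((D.restrict B).isDirectSummand_smap_iff).mp h2

theorem isC4Star (D : ModTransfer R₁ M₁ R₂ M₂) (h : IsC4StarModule R₂ M₂) : IsC4StarModule R₁ M₁ :=
  fun N => (D.restrict N).isC4Module (h (D.smap N))

/-- Conjugation of a linear equivalence between submodules by the transfer. -/
def conjEquiv {X Y : Submodule R₁ M₁} (f : ↥X ≃ₗ[R₁] ↥Y) :
    ↥(D.smap X) ≃ₗ[R₂] ↥(D.smap Y) :=
  { D.conj (f : ↥X →ₗ[R₁] ↥Y) with
    invFun := fun y => (D.restrict X).ε (f.symm ((D.restrict Y).ε.symm y))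
    left_inv := fun x => by
      show (D.restrict X).ε (f.symm ((D.restrict Y).ε.symm
        (D.conj (f : ↥X →ₗ[R₁] ↥Y) x))) = x
      rw [conj_apply, (D.restrict Y).ε.symm_apply_apply]
      simp only [LinearEquiv.coe_coe, LinearEquiv.symm_apply_apply]
      rw [(D.restrict X).ε.apply_symm_apply]
    right_inv := fun y => by
      show D.conj (f : ↥X →ₗ[R₁] ↥Y) ((D.restrict X).ε (f.symm ((D.restrict Y).ε.symm y))) = y
      rw [conj_apply, (D.restrict X).ε.symm_apply_apply]
      simp only [LinearEquiv.coe_coe, LinearEquiv.apply_symm_apply]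
      rw [(D.restrict Y).ε.apply_symm_apply] }

theorem isEssentialIn_of_smap {X A : Submodule R₁ M₁}
    (h : IsEssentialIn (D.smap X) (D.smap A)) : IsEssentialIn X A := by
  obtain ⟨h1, h2⟩ := h
  refine ⟨D.smap.le_iff_le.mp h1, fun N hNA hN hXN => ?_⟩
  refine h2 (D.smap N) (D.smap.le_iff_le.mpr hNA) ?_ ?_
  · intro hb
    apply hN
    have := congrArg D.smap.symm hb
    rwa [OrderIso.symm_apply_apply, OrderIso.map_bot] at this
  · rw [← D.smap.map_inf, hXN, D.smap.map_bot]

/-- The componentwise image of an `SWTriple` under a transfer. -/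
def trip (t : SWTriple R₁ M₁) : SWTriple R₂ M₂ where
  X := D.smap t.X
  Y := D.smap t.Y
  semisimpleX := (D.restrict t.X).symm.isSemisimple t.semisimpleX
  semisimpleY := (D.restrict t.Y).symm.isSemisimple t.semisimpleY
  summandX := D.isDirectSummand_smap_iff.mpr t.summandX
  summandY := D.isDirectSummand_smap_iff.mpr t.summandY
  disj := by rw [← D.smap.map_inf, t.disj, D.smap.map_bot]
  f := D.conjEquiv t.f

theorem isSemiWeakCS (D : ModTransfer R₁ M₁ R₂ M₂) (h : IsSemiWeakCS R₂ M₂) : IsSemiWeakCS R₁ M₁ := by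
  intro C hC
  have hC2 : IsChain SWTriple.Extends (D.trip '' C) := by
    refine hC.image_of_map_rel _ _ _ ?_
    rintro t s ⟨hX, hY, hcomm⟩
    refine ⟨D.smap.le_iff_le.mpr hX, D.smap.le_iff_le.mpr hY, ?_⟩
    intro x
    show ((D.conjEquiv s.f ⟨x.1, _⟩ : ↥(D.smap s.Y)) : M₂) =
      ((D.conjEquiv t.f x : ↥(D.smap t.Y)) : M₂)
    show ((D.restrict s.Y).ε (s.f ((D.restrict s.X).ε.symm ⟨x.1, _⟩)) : M₂) =
      ((D.restrict t.Y).ε (t.f ((D.restrict t.X).ε.symm x)) : M₂)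
    show D.ε ((s.f ⟨D.ε.symm x.1, _⟩ : ↥s.Y) : M₁) = D.ε ((t.f ⟨D.ε.symm x.1, _⟩ : ↥t.Y) : M₁)
    exact congrArg D.ε (hcomm ⟨D.ε.symm x.1, x.2⟩)
  obtain ⟨A₂, B₂, hA₂, hB₂, heA, heB⟩ := h (D.trip '' C) hC2
  have hsX : (⨆ t ∈ D.trip '' C, t.X) = D.smap (⨆ t ∈ C, t.X) := by
    rw [iSup_image, OrderIso.map_iSup]
    refine iSup_congr fun t => ?_
    rw [OrderIso.map_iSup]
    rfl
  have hsY : (⨆ t ∈ D.trip '' C, t.Y) = D.smap (⨆ t ∈ C, t.Y) := by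
    rw [iSup_image, OrderIso.map_iSup]
    refine iSup_congr fun t => ?_
    rw [OrderIso.map_iSup]
    rfl
  rw [hsX] at heA
  rw [hsY] at heB
  refine ⟨D.smap.symm A₂, D.smap.symm B₂, ?_, ?_, ?_, ?_⟩
  · rcases hA₂ with ⟨K, hK⟩
    refine ⟨D.smap.symm K, ?_⟩
    exact D.smap.symm.isCompl hK
  · rcases hB₂ with ⟨K, hK⟩
    exact ⟨D.smap.symm K, D.smap.symm.isCompl hK⟩
  · apply D.isEssentialIn_of_smap
    rwa [OrderIso.apply_symm_apply]
  · apply D.isEssentialIn_of_smap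
    rwa [OrderIso.apply_symm_apply]

theorem isStrongly (D : ModTransfer R₁ M₁ R₂ M₂) (h : IsStronglyC4StarModule R₂ M₂) : IsStronglyC4StarModule R₁ M₁ :=
  ⟨D.isSemiWeakCS h.1, D.isC4Star h.2⟩

end ModTransfer

/-- A linear equivalence gives a transfer datum. -/
def ModTransfer.ofLinearEquiv {R M M' : Type*} [Ring R] [AddCommGroup M] [Module R M]
    [AddCommGroup M'] [Module R M'] (e : M ≃ₗ[R] M') : ModTransfer R M R M' where
  ε := e.toAddEquiv
  σ := id
  τ := id
  hσ := fun r m => (map_smul e r m).symm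
  hτ := fun x m => map_smul e x m

theorem isC4Star_submodule {R M : Type*} [Ring R] [AddCommGroup M] [Module R M]
    (h : IsC4StarModule R M) (P : Submodule R M) : IsC4StarModule R ↥P := by
  intro Q
  exact (ModTransfer.ofLinearEquiv
    (Submodule.equivMapOfInjective P.subtype (Submodule.injective_subtype P) Q)).isC4Module
    (h (Q.map P.subtype))

theorem isCompl_of_split {α : Type*} [Lattice α] [BoundedOrder α] [IsModularLattice α]
    {A A' B C : α} (hA : A ≤ B) (hd : Disjoint A A') (hs : A ⊔ A' = B) (hBC : IsCompl B C) :
    IsCompl A (A' ⊔ C) := by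
  have hA' : A' ≤ B := le_sup_right.trans hs.le
  have h1 : (A' ⊔ C) ⊓ B = A' := by
    rw [sup_inf_assoc_of_le _ hA', inf_comm C B, disjoint_iff.mp hBC.disjoint, sup_bot_eq]
  constructor
  · rw [disjoint_iff]
    calc A ⊓ (A' ⊔ C) = (A ⊓ B) ⊓ (A' ⊔ C) := by rw [inf_eq_left.mpr hA]
      _ = A ⊓ (B ⊓ (A' ⊔ C)) := inf_assoc A B (A' ⊔ C)
      _ = A ⊓ A' := by rw [inf_comm B, h1]
      _ = ⊥ := disjoint_iff.mp hd
  · rw [codisjoint_iff, ← sup_assoc, hs]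
    exact codisjoint_iff.mp hBC.codisjoint

section SemiweakRestrict

variable {R M : Type*} [Ring R] [AddCommGroup M] [Module R M]

theorem comap_isCompl {P K K' : Submodule R M} (hK : K ≤ P) (hK' : K' ≤ P)
    (hd : Disjoint K K') (hs : K ⊔ K' = P) :
    IsCompl (K.comap P.subtype) (K'.comap P.subtype) := by
  constructor
  · rw [disjoint_iff, eq_bot_iff]
    rintro x ⟨hx1, hx2⟩
    have hmem : (x : M) ∈ K ⊓ K' := ⟨hx1, hx2⟩
    rw [disjoint_iff.mp hd] at hmem
    exact (Submodule.mem_bot _).mpr (Subtype.ext (by simpa using hmem))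
  · rw [codisjoint_iff, eq_top_iff]
    rintro x -
    have hx : (x : M) ∈ K ⊔ K' := by rw [hs]; exact x.2
    obtain ⟨a, ha, b, hb, hab⟩ := Submodule.mem_sup.mp hx
    exact Submodule.mem_sup.mpr ⟨⟨a, hK ha⟩, ha, ⟨b, hK' hb⟩, hb, Subtype.ext hab⟩

theorem map_isDirectSummand {P Q : Submodule R M} (hPQ : IsCompl P Q)
    {X : Submodule R ↥P} (hX : IsDirectSummand X) : IsDirectSummand (X.map P.subtype) := by
  obtain ⟨X', hX'⟩ := hX
  refine ⟨X'.map P.subtype ⊔ Q, ?_⟩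
  refine isCompl_of_split (Submodule.map_subtype_le P X) ?_ ?_ hPQ
  · rw [disjoint_iff, ← Submodule.map_inf _ (Submodule.injective_subtype P),
      disjoint_iff.mp hX'.disjoint, Submodule.map_bot]
  · rw [← Submodule.map_sup, codisjoint_iff.mp hX'.codisjoint, Submodule.map_top,
      Submodule.range_subtype]

theorem essential_comap {P A : Submodule R M} {XP : Submodule R ↥P}
    (hAP : A ≤ P) (hess : IsEssentialIn (XP.map P.subtype) A) :
    IsEssentialIn XP (A.comap P.subtype) := by
  obtain ⟨h1, h2⟩ := hess
  constructor
  · intro x hx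
    exact h1 ⟨x, hx, rfl⟩
  · intro N hN hNbot hXN
    have hmapN : N.map P.subtype ≤ A := by
      rintro y ⟨x, hx, rfl⟩
      exact hN hx
    have hmapNbot : N.map P.subtype ≠ ⊥ := by
      intro hb
      apply hNbot
      rw [eq_bot_iff]
      intro x hx
      have hmem : (x : M) ∈ N.map P.subtype := ⟨x, hx, rfl⟩
      rw [hb] at hmem
      exact (Submodule.mem_bot _).mpr (Subtype.ext (by simpa using hmem))
    refine h2 (N.map P.subtype) hmapN hmapNbot ?_
    rw [← Submodule.map_inf _ (Submodule.injective_subtype P), hXN, Submodule.map_bot]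

theorem summand_side {P Q A : Submodule R M} (hPQ : IsCompl P Q)
    (hsplitA : (A ⊓ P) ⊔ (A ⊓ Q) = A) (hA : IsDirectSummand A)
    {XP : Submodule R ↥P} (hess : IsEssentialIn (XP.map P.subtype) A) :
    ∃ A₁ : Submodule R ↥P, IsDirectSummand A₁ ∧ IsEssentialIn XP A₁ := by
  obtain ⟨CA, hCA⟩ := hA
  have hd : Disjoint (A ⊓ P) (A ⊓ Q) := hPQ.disjoint.mono inf_le_right inf_le_right
  have h1 : IsCompl (A ⊓ P) ((A ⊓ Q) ⊔ CA) := isCompl_of_split inf_le_left hd hsplitA hCA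
  set E := (A ⊓ Q) ⊔ CA with hE
  have hsupP : (A ⊓ P) ⊔ (E ⊓ P) = P := by
    rw [← sup_inf_assoc_of_le E inf_le_right, codisjoint_iff.mp h1.codisjoint, top_inf_eq]
  have hdP : Disjoint (A ⊓ P) (E ⊓ P) := h1.disjoint.mono le_rfl inf_le_left
  refine ⟨(A ⊓ P).comap P.subtype,
    ⟨(E ⊓ P).comap P.subtype, comap_isCompl inf_le_right inf_le_right hdP hsupP⟩, ?_⟩
  have hessAP : IsEssentialIn (XP.map P.subtype) (A ⊓ P) := by
    obtain ⟨e1, e2⟩ := hess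
    exact ⟨le_inf e1 (Submodule.map_subtype_le P XP),
      fun N hN hNb => e2 N (hN.trans inf_le_left) hNb⟩
  exact essential_comap inf_le_right hessAP

theorem semiweak_restrict {P Q : Submodule R M} (hPQ : IsCompl P Q)
    (hsplit : ∀ K : Submodule R M, (K ⊓ P) ⊔ (K ⊓ Q) = K)
    (h : IsSemiWeakCS R M) : IsSemiWeakCS R ↥P := by
  intro C hC
  let eqv : ∀ X : Submodule R ↥P, ↥X ≃ₗ[R] ↥(X.map P.subtype) :=
    fun X => Submodule.equivMapOfInjective P.subtype (Submodule.injective_subtype P) X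
  let Ψ : SWTriple R ↥P → SWTriple R M := fun t =>
    { X := t.X.map P.subtype
      Y := t.Y.map P.subtype
      semisimpleX := (ModTransfer.ofLinearEquiv (eqv t.X).symm).isSemisimple t.semisimpleX
      semisimpleY := (ModTransfer.ofLinearEquiv (eqv t.Y).symm).isSemisimple t.semisimpleY
      summandX := map_isDirectSummand hPQ t.summandX
      summandY := map_isDirectSummand hPQ t.summandY
      disj := by
        rw [← Submodule.map_inf _ (Submodule.injective_subtype P), t.disj, Submodule.map_bot]
      f := ((eqv t.X).symm.trans t.f).trans (eqv t.Y) }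
  have hC2 : IsChain SWTriple.Extends (Ψ '' C) := by
    refine hC.image_of_map_rel _ _ _ ?_
    rintro t s ⟨hX, hY, hcomm⟩
    refine ⟨Submodule.map_mono hX, Submodule.map_mono hY, ?_⟩
    intro x
    set u : ↥t.X := (eqv t.X).symm x with hu
    set u' : ↥s.X := (eqv s.X).symm ⟨x.1, Submodule.map_mono hX x.2⟩ with hu'
    have hcu : ((u : ↥P) : M) = (x : M) :=
      Submodule.map_equivMapOfInjective_symm_apply P.subtype (Submodule.injective_subtype P)
        t.X x
    have hcu' : ((u' : ↥P) : M) = (x : M) :=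
      Submodule.map_equivMapOfInjective_symm_apply P.subtype (Submodule.injective_subtype P)
        s.X (⟨x.1, Submodule.map_mono hX x.2⟩ : ↥(s.X.map P.subtype))
    have key : u' = ⟨(u : ↥P), hX u.2⟩ := by
      apply Subtype.ext
      apply Subtype.ext
      rw [hcu']
      exact hcu.symm
    calc ((Ψ s).f ⟨x.1, Submodule.map_mono hX x.2⟩ : M)
        = ((s.f u' : ↥P) : M) := Submodule.coe_equivMapOfInjective_apply P.subtype
            (Submodule.injective_subtype P) s.Y (s.f u')
      _ = ((t.f u : ↥P) : M) := by rw [key]; exact congrArg _ (hcomm u)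
      _ = ((Ψ t).f x : M) := (Submodule.coe_equivMapOfInjective_apply P.subtype
            (Submodule.injective_subtype P) t.Y (t.f u)).symm
  obtain ⟨A, B, hA, hB, heA, heB⟩ := h (Ψ '' C) hC2
  have hsX : (⨆ t ∈ Ψ '' C, t.X) = (⨆ t ∈ C, t.X).map P.subtype := by
    rw [iSup_image, Submodule.map_iSup]
    refine iSup_congr fun t => ?_
    rw [Submodule.map_iSup]
  have hsY : (⨆ t ∈ Ψ '' C, t.Y) = (⨆ t ∈ C, t.Y).map P.subtype := by
    rw [iSup_image, Submodule.map_iSup]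
    refine iSup_congr fun t => ?_
    rw [Submodule.map_iSup]
  rw [hsX] at heA
  rw [hsY] at heB
  obtain ⟨A₁, hA₁, heA₁⟩ := summand_side hPQ (hsplit A) hA heA
  obtain ⟨B₁, hB₁, heB₁⟩ := summand_side hPQ (hsplit B) hB heB
  exact ⟨A₁, B₁, hA₁, hB₁, heA₁, heB₁⟩

end SemiweakRestrict

section ProdFactors

variable (S T : Type*) [Ring S] [Ring T]

/-- The ideal `S × 0` of `S × T` as a right submodule. -/
def fstIdeal : Submodule (S × T)ᵐᵒᵖ (S × T) where
  carrier := {x | x.2 = 0}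
  add_mem' := by
    intro a b ha hb
    show (a + b).2 = 0
    rw [Prod.snd_add, ha, hb, add_zero]
  zero_mem' := rfl
  smul_mem' := by
    intro c x hx
    show (x * unop c).2 = 0
    rw [Prod.snd_mul, hx, zero_mul]

/-- The ideal `0 × T` of `S × T` as a right submodule. -/
def sndIdeal : Submodule (S × T)ᵐᵒᵖ (S × T) where
  carrier := {x | x.1 = 0}
  add_mem' := by
    intro a b ha hb
    show (a + b).1 = 0
    rw [Prod.fst_add, ha, hb, add_zero]
  zero_mem' := rfl
  smul_mem' := by
    intro c x hx
    show (x * unop c).1 = 0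
    rw [Prod.fst_mul, hx, zero_mul]

theorem fstIdeal_isCompl : IsCompl (fstIdeal S T) (sndIdeal S T) := by
  constructor
  · rw [disjoint_iff, eq_bot_iff]
    rintro x ⟨hx1, hx2⟩
    exact (Submodule.mem_bot _).mpr (Prod.ext hx2 hx1)
  · rw [codisjoint_iff, eq_top_iff]
    rintro x -
    refine Submodule.mem_sup.mpr ⟨(x.1, 0), rfl, (0, x.2), rfl, ?_⟩
    exact Prod.ext (add_zero x.1) (zero_add x.2)

theorem prod_split (K : Submodule (S × T)ᵐᵒᵖ (S × T)) :
    (K ⊓ fstIdeal S T) ⊔ (K ⊓ sndIdeal S T) = K := by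
  refine le_antisymm (sup_le inf_le_left inf_le_left) ?_
  intro x hx
  have h1 : x * ((1 : S), (0 : T)) ∈ K := K.smul_mem (op ((1 : S), (0 : T))) hx
  have h2 : x * ((0 : S), (1 : T)) ∈ K := K.smul_mem (op ((0 : S), (1 : T))) hx
  have e1 : x * ((1 : S), (0 : T)) = (x.1, 0) := Prod.ext (mul_one x.1) (mul_zero x.2)
  have e2 : x * ((0 : S), (1 : T)) = (0, x.2) := Prod.ext (mul_zero x.1) (mul_one x.2)
  refine Submodule.mem_sup.mpr ⟨(x.1, 0), ⟨e1 ▸ h1, rfl⟩, (0, x.2), ⟨e2 ▸ h2, rfl⟩, ?_⟩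
  exact Prod.ext (add_zero x.1) (zero_add x.2)

/-- The transfer datum between the right regular module of `S` and the ideal `S × 0`. -/
def fstTransfer : ModTransfer Sᵐᵒᵖ S (S × T)ᵐᵒᵖ ↥(fstIdeal S T) where
  ε :=
    { toFun := fun s => ⟨(s, 0), rfl⟩
      invFun := fun x => x.1.1
      left_inv := fun s => rfl
      right_inv := fun x => Subtype.ext (Prod.ext rfl x.2.symm)
      map_add' := fun a b => Subtype.ext (Prod.ext rfl (add_zero 0).symm) }
  σ := fun r => op (unop r).1
  τ := fun x => op ((unop x), 0)
  hσ := fun r m => Subtype.ext (Prod.ext rfl (zero_mul (unop r).2))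
  hτ := fun x m => Subtype.ext (Prod.ext rfl (zero_mul (0 : T)).symm)

/-- The transfer datum between the right regular module of `T` and the ideal `0 × T`. -/
def sndTransfer : ModTransfer Tᵐᵒᵖ T (S × T)ᵐᵒᵖ ↥(sndIdeal S T) where
  ε :=
    { toFun := fun t => ⟨(0, t), rfl⟩
      invFun := fun x => x.1.2
      left_inv := fun t => rfl
      right_inv := fun x => Subtype.ext (Prod.ext x.2.symm rfl)
      map_add' := fun a b => Subtype.ext (Prod.ext (add_zero 0).symm rfl) }
  σ := fun r => op (unop r).2
  τ := fun x => op (0, (unop x))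
  hσ := fun r m => Subtype.ext (Prod.ext (zero_mul (unop r).1) rfl)
  hτ := fun x m => Subtype.ext (Prod.ext (zero_mul (0 : S)).symm rfl)

end ProdFactors

end TransferMachinery

/-- If the direct product `R = S × T` is a strongly right `C4*`-ring, then both
`S` and `T` are strongly right `C4*`-rings. -/
theorem right_factor_inheritance_strong {S T : Type*} [Ring S] [Ring T]
    (h : IsStronglyRightC4StarRing (S × T)) :
    IsStronglyRightC4StarRing S ∧ IsStronglyRightC4StarRing T := by
  obtain ⟨hSW, hC4⟩ := h
  have hcompl := fstIdeal_isCompl S T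
  constructor
  · exact (fstTransfer S T).isStrongly
      ⟨semiweak_restrict hcompl (prod_split S T) hSW, isC4Star_submodule hC4 _⟩
  · have hcompl' : IsCompl (sndIdeal S T) (fstIdeal S T) := hcompl.symm
    have hsplit' : ∀ K : Submodule (S × T)ᵐᵒᵖ (S × T),
        (K ⊓ sndIdeal S T) ⊔ (K ⊓ fstIdeal S T) = K := fun K => by
      rw [sup_comm]; exact prod_split S T K
    exact (sndTransfer S T).isStrongly
      ⟨semiweak_restrict hcompl' hsplit' hSW, isC4Star_submodule hC4 _⟩
end

section
/- Let R be a strongly right C4*-ring admitting a right-to-left symmetry datum R = Σ × T, and fix n ≥ 1. If the matrix ring M_n(T) has summand-square-free right regular module and satisfies the hereditary side-transfer condition HST and the corner-stability axiom CSA, then the matrix ring M_n(R) is a strongly left C4*-ring. -/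
open MulOpposite

section Transport

variable {Q Q' : Type*} [Ring Q] [Ring Q']

/-- Semilinear transport data along a ring hom. -/
structure SLD (σ : Q →+* Q') (M M' : Type*) [AddCommGroup M] [AddCommGroup M']
    [Module Q M] [Module Q' M'] where
  g : M ≃+ M'
  hg : ∀ (q : Q) (m : M), g (q • m) = σ q • g m

namespace SLD

variable {σ : Q →+* Q'} {M M' : Type*} [AddCommGroup M] [AddCommGroup M']
  [Module Q M] [Module Q' M']

def mapSub (d : SLD σ M M') (hσ : Function.Surjective σ) (S : Submodule Q M) :
    Submodule Q' M' where
  carrier := d.g '' S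
  add_mem' := by
    rintro _ _ ⟨a, ha, rfl⟩ ⟨b, hb, rfl⟩
    exact ⟨a + b, S.add_mem ha hb, map_add _ _ _⟩
  zero_mem' := ⟨0, S.zero_mem, map_zero _⟩
  smul_mem' := by
    rintro q' _ ⟨a, ha, rfl⟩
    obtain ⟨q, rfl⟩ := hσ q'
    exact ⟨q • a, S.smul_mem q ha, (d.hg q a).symm ▸ rfl⟩

lemma mem_mapSub (d : SLD σ M M') (hσ : Function.Surjective σ) {S : Submodule Q M} {m' : M'} :
    m' ∈ d.mapSub hσ S ↔ d.g.symm m' ∈ S := by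
  constructor
  · rintro ⟨a, ha, rfl⟩; simpa using ha
  · intro h; exact ⟨d.g.symm m', h, by simp⟩

def comapSub (d : SLD σ M M') (S' : Submodule Q' M') : Submodule Q M where
  carrier := d.g ⁻¹' S'
  add_mem' := fun ha hb => by
    simp only [Set.mem_preimage, map_add] at *
    exact S'.add_mem ha hb
  zero_mem' := by simp only [Set.mem_preimage, map_zero]; exact S'.zero_mem
  smul_mem' := fun q a ha => by
    simp only [Set.mem_preimage, d.hg] at *
    exact S'.smul_mem _ ha

def subOrderIso (d : SLD σ M M') (hσ : Function.Surjective σ) :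
    Submodule Q M ≃o Submodule Q' M' where
  toFun := d.mapSub hσ
  invFun := d.comapSub
  left_inv S := by
    ext x
    simp only [comapSub, Submodule.mem_mk, AddSubmonoid.mem_mk, AddSubsemigroup.mem_mk,
      Set.mem_preimage, SetLike.mem_coe, mem_mapSub d hσ, AddEquiv.symm_apply_apply]
  right_inv S' := by
    ext y
    simp only [mem_mapSub d hσ, comapSub, Submodule.mem_mk, AddSubmonoid.mem_mk,
      AddSubsemigroup.mem_mk, Set.mem_preimage, SetLike.mem_coe, AddEquiv.apply_symm_apply]
  map_rel_iff' := by
    intro S T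
    constructor
    · intro h x hx
      have : d.g x ∈ d.mapSub hσ T := h ⟨x, hx, rfl⟩
      simpa [mem_mapSub d hσ] using this
    · rintro h _ ⟨a, ha, rfl⟩
      exact ⟨a, h ha, rfl⟩

def transEquiv (d : SLD σ M M') {M₂ M₂' : Type*} [AddCommGroup M₂] [AddCommGroup M₂']
    [Module Q M₂] [Module Q' M₂'] (d₂ : SLD σ M₂ M₂') (hσ : Function.Surjective σ)
    (e : M ≃ₗ[Q] M₂) : M' ≃ₗ[Q'] M₂' :=
  { d.g.symm.trans (e.toAddEquiv.trans d₂.g) with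
    map_smul' := by
      intro q' m'
      obtain ⟨q, rfl⟩ := hσ q'
      have h1 : d.g.symm (σ q • m') = q • d.g.symm m' := by
        apply d.g.injective
        rw [d.hg, AddEquiv.apply_symm_apply, AddEquiv.apply_symm_apply]
      show d₂.g (e (d.g.symm (σ q • m'))) = σ q • d₂.g (e (d.g.symm m'))
      rw [h1, map_smul, d₂.hg] }

def restrict (d : SLD σ M M') (hσ : Function.Surjective σ) (S : Submodule Q M) :
    SLD σ ↥S ↥(d.mapSub hσ S) where
  g := { toFun := fun x => ⟨d.g x.1, ⟨x.1, x.2, rfl⟩⟩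
         invFun := fun y => ⟨d.g.symm y.1, (d.mem_mapSub hσ).mp y.2⟩
         left_inv := fun x => Subtype.ext (by simp)
         right_inv := fun y => Subtype.ext (by simp)
         map_add' := fun x y => Subtype.ext (by simp) }
  hg := fun q x => Subtype.ext (by
    show d.g ((q • x : ↥S) : M) = σ q • (d.g x.1)
    rw [Submodule.coe_smul, d.hg])

lemma semisimple (d : SLD σ M M') (hσ : Function.Surjective σ)
    (h : IsSemisimpleModule Q' M') : IsSemisimpleModule Q M := by
  letI : ComplementedLattice (Submodule Q' M') := h.toComplementedLattice
  exact { toComplementedLattice := (d.subOrderIso hσ).symm.complementedLattice }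

lemma mapSub_bot_iff (d : SLD σ M M') (hσ : Function.Surjective σ) {S : Submodule Q M} :
    d.mapSub hσ S = ⊥ ↔ S = ⊥ := by
  constructor
  · intro h
    have := (d.subOrderIso hσ).injective (a₁ := S) (a₂ := ⊥)
      (by rw [show (d.subOrderIso hσ) ⊥ = ⊥ from (d.subOrderIso hσ).map_bot]; exact h)
    exact this
  · intro h; rw [h]; exact (d.subOrderIso hσ).map_bot

lemma mapSub_inf (d : SLD σ M M') (hσ : Function.Surjective σ) (A B : Submodule Q M) :
    d.mapSub hσ (A ⊓ B) = d.mapSub hσ A ⊓ d.mapSub hσ B :=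
  (d.subOrderIso hσ).map_inf A B

lemma mapSub_isCompl (d : SLD σ M M') (hσ : Function.Surjective σ) {A B : Submodule Q M}
    (h : IsCompl A B) : IsCompl (d.mapSub hσ A) (d.mapSub hσ B) :=
  (d.subOrderIso hσ).isCompl h

lemma squareFree (d : SLD σ M M') (hσ : Function.Surjective σ)
    (h : IsSquareFreeModule Q' M') : IsSquareFreeModule Q M := by
  intro A B hA hB hAB
  constructor
  intro e
  have hA' : d.mapSub hσ A ≠ ⊥ := fun hbot => hA ((d.mapSub_bot_iff hσ).mp hbot)
  have hB' : d.mapSub hσ B ≠ ⊥ := fun hbot => hB ((d.mapSub_bot_iff hσ).mp hbot)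
  have hdisj : d.mapSub hσ A ⊓ d.mapSub hσ B = ⊥ := by
    rw [← d.mapSub_inf hσ, hAB, (d.mapSub_bot_iff hσ)]
  have e' := (d.restrict hσ A).transEquiv (d.restrict hσ B) hσ e
  exact (h _ _ hA' hB' hdisj).false e'

lemma summandSquareFree (d : SLD σ M M') (hσ : Function.Surjective σ)
    (h : IsSummandSquareFree Q' M') : IsSummandSquareFree Q M := by
  intro A B hAs hBs hA hB hAB
  constructor
  intro e
  have hA' : d.mapSub hσ A ≠ ⊥ := fun hbot => hA ((d.mapSub_bot_iff hσ).mp hbot)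
  have hB' : d.mapSub hσ B ≠ ⊥ := fun hbot => hB ((d.mapSub_bot_iff hσ).mp hbot)
  have hdisj : d.mapSub hσ A ⊓ d.mapSub hσ B = ⊥ := by
    rw [← d.mapSub_inf hσ, hAB, (d.mapSub_bot_iff hσ)]
  obtain ⟨CA, hCA⟩ := hAs
  obtain ⟨CB, hCB⟩ := hBs
  have e' := (d.restrict hσ A).transEquiv (d.restrict hσ B) hσ e
  exact (h _ _ ⟨_, d.mapSub_isCompl hσ hCA⟩ ⟨_, d.mapSub_isCompl hσ hCB⟩
    hA' hB' hdisj).false e'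

end SLD

end Transport

section MainLemma

variable {Q : Type*} [Ring Q] {M : Type*} [AddCommGroup M] [Module Q M]

/-- Submodule of elements fixed by scalar `c` (requires `c` central). -/
def smulFix (c : Q) (hcomm : ∀ x : Q, c * x = x * c) : Submodule Q M where
  carrier := {y | c • y = y}
  add_mem' := fun {a b} ha hb => by
    simp only [Set.mem_setOf_eq, smul_add] at *
    rw [ha, hb]
  zero_mem' := smul_zero c
  smul_mem' := fun q y hy => by
    simp only [Set.mem_setOf_eq] at *
    rw [smul_smul, hcomm q, ← smul_smul, hy]

/-- Submodule of elements killed by scalar `c` (requires `c` central). -/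
def smulKill (c : Q) (hcomm : ∀ x : Q, c * x = x * c) : Submodule Q M where
  carrier := {y | c • y = 0}
  add_mem' := fun {a b} ha hb => by
    simp only [Set.mem_setOf_eq, smul_add] at *
    rw [ha, hb, add_zero]
  zero_mem' := smul_zero c
  smul_mem' := fun q y hy => by
    simp only [Set.mem_setOf_eq] at *
    rw [smul_smul, hcomm q, ← smul_smul, hy, smul_zero]

theorem mem_smulFix {c : Q} {hcomm : ∀ x : Q, c * x = x * c} {y : M} :
    y ∈ smulFix c hcomm ↔ c • y = y := Iff.rfl

theorem mem_smulKill {c : Q} {hcomm : ∀ x : Q, c * x = x * c} {y : M} :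
    y ∈ smulKill c hcomm ↔ c • y = 0 := Iff.rfl

theorem isCompl_smulFix_smulKill {c : Q} (hc : IsIdempotentElem c)
    (hcomm : ∀ x : Q, c * x = x * c) :
    IsCompl (smulFix c hcomm : Submodule Q M) (smulKill c hcomm) := by
  constructor
  · rw [disjoint_iff, eq_bot_iff]
    rintro y ⟨h1, h2⟩
    have h1 : c • y = y := h1
    have h2 : c • y = 0 := h2
    simp only [Submodule.mem_bot]
    rw [← h1, h2]
  · rw [codisjoint_iff, eq_top_iff]
    intro y _
    apply Submodule.mem_sup.mpr
    refine ⟨c • y, ?_, y - c • y, ?_, by abel⟩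
    · show c • c • y = c • y
      rw [smul_smul, hc]
    · show c • (y - c • y) = 0
      rw [smul_sub, smul_smul, hc, sub_self]

/-- Square-freeness of a submodule, in flattened form. -/
theorem flat_squareFree {I : Submodule Q M} (h : IsSquareFreeModule Q ↥I)
    {A B : Submodule Q M} (hA : A ≤ I) (hB : B ≤ I)
    (hAB : A ⊓ B = ⊥) (e : ↥A ≃ₗ[Q] ↥B) : A = ⊥ ∧ B = ⊥ := by
  have key : ∀ A B : Submodule Q M, A ≤ I → B ≤ I → A ⊓ B = ⊥ →
      (↥A ≃ₗ[Q] ↥B) → A ≠ ⊥ → B ≠ ⊥ → False := by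
    intro A B hA hB hAB e hA0 hB0
    set A' := A.comap I.subtype with hA'
    set B' := B.comap I.subtype with hB'
    have hmapA : A'.map I.subtype = A := by
      rw [hA', Submodule.map_comap_subtype, inf_eq_right.mpr hA]
    have hmapB : B'.map I.subtype = B := by
      rw [hB', Submodule.map_comap_subtype, inf_eq_right.mpr hB]
    have hA'0 : A' ≠ ⊥ := by
      intro hb; apply hA0; rw [← hmapA, hb, Submodule.map_bot]
    have hB'0 : B' ≠ ⊥ := by
      intro hb; apply hB0; rw [← hmapB, hb, Submodule.map_bot]
    have hdisj : A' ⊓ B' = ⊥ := by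
      rw [hA', hB', ← Submodule.comap_inf, hAB, Submodule.comap_bot,
        Submodule.ker_subtype]
    have e' : ↥A' ≃ₗ[Q] ↥B' :=
      (Submodule.comapSubtypeEquivOfLe hA).trans
        (e.trans (Submodule.comapSubtypeEquivOfLe hB).symm)
    exact (h A' B' hA'0 hB'0 hdisj).false e'
  by_cases hA0 : A = ⊥
  · subst hA0
    refine ⟨rfl, ?_⟩
    rw [eq_bot_iff]
    intro b hb
    have : e.symm ⟨b, hb⟩ = 0 := by
      have := (e.symm ⟨b, hb⟩).2
      simp only [Submodule.mem_bot] at this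
      exact Subtype.ext this
    have : (⟨b, hb⟩ : ↥B) = 0 := by
      rw [← e.apply_symm_apply ⟨b, hb⟩, this, map_zero]
    simpa using congrArg Subtype.val this
  · by_cases hB0 : B = ⊥
    · exfalso
      apply hA0
      subst hB0
      rw [eq_bot_iff]
      intro a ha
      have : e ⟨a, ha⟩ = 0 := by
        have := (e ⟨a, ha⟩).2
        simp only [Submodule.mem_bot] at this
        exact Subtype.ext this
      have : (⟨a, ha⟩ : ↥A) = 0 := by
        rw [← e.symm_apply_apply ⟨a, ha⟩, this, map_zero]
      simpa using congrArg Subtype.val this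
    · exact absurd (key A B hA hB hAB e hA0 hB0) (by simp)

theorem isCompl_extend {A B X W : Submodule Q M}
    (h : IsCompl A B) (hsup : X ⊔ W = A) (hinf : X ⊓ W = ⊥) : IsCompl X (W ⊔ B) := by
  have hXA : X ≤ A := hsup ▸ le_sup_left
  have hWA : W ≤ A := hsup ▸ le_sup_right
  constructor
  · rw [disjoint_iff]
    have h1 : (W ⊔ B) ⊓ A = W := by
      rw [sup_inf_assoc_of_le _ hWA, h.disjoint.symm.eq_bot, sup_bot_eq]
    calc X ⊓ (W ⊔ B) = (X ⊓ A) ⊓ (W ⊔ B) := by rw [inf_eq_left.mpr hXA]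
      _ = X ⊓ ((W ⊔ B) ⊓ A) := by rw [inf_assoc, inf_comm A]
      _ = X ⊓ W := by rw [h1]
      _ = ⊥ := hinf
  · rw [codisjoint_iff, ← sup_assoc, hsup, h.codisjoint.eq_top]

theorem summand_of_le_semisimple {J U : Submodule Q M}
    (hU : U ≤ J) (hJss : IsSemisimpleModule Q ↥J) :
    ∃ W : Submodule Q M, U ⊔ W = J ∧ U ⊓ W = ⊥ := by
  letI : ComplementedLattice (Submodule Q ↥J) := hJss.toComplementedLattice
  obtain ⟨w, hw⟩ := exists_isCompl (U.comap J.subtype)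
  have hmap : (U.comap J.subtype).map J.subtype = U := by
    rw [Submodule.map_comap_subtype, inf_eq_right.mpr hU]
  refine ⟨w.map J.subtype, ?_, ?_⟩
  · rw [← hmap, ← Submodule.map_sup, hw.codisjoint.eq_top, Submodule.map_subtype_top]
  · rw [← hmap, ← Submodule.map_inf _ (Submodule.injective_subtype J),
      hw.disjoint.eq_bot, Submodule.map_bot]

theorem semisimple_of_le {I J : Submodule Q M} (hJI : J ≤ I)
    (hss : IsSemisimpleModule Q ↥I) : IsSemisimpleModule Q ↥J := by
  letI := hss
  exact IsSemisimpleModule.congr (Submodule.comapSubtypeEquivOfLe hJI).symm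

theorem semisimple_of_map_le {M₂ : Type*} [AddCommGroup M₂] [Module Q M₂]
    (f : M →ₗ[Q] M₂) (hf : Function.Injective f) {J : Submodule Q M} {I : Submodule Q M₂}
    (h : J.map f ≤ I) (hss : IsSemisimpleModule Q ↥I) : IsSemisimpleModule Q ↥J := by
  haveI := semisimple_of_le h hss
  exact IsSemisimpleModule.congr (Submodule.equivMapOfInjective f hf J)

theorem map_eq_bot_iff_of_injective {M₂ : Type*} [AddCommGroup M₂] [Module Q M₂]
    (f : M →ₗ[Q] M₂) (hf : Function.Injective f) {J : Submodule Q M} :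
    J.map f = ⊥ ↔ J = ⊥ := by
  constructor
  · intro h
    rw [eq_bot_iff]
    intro x hx
    have : f x ∈ J.map f := ⟨x, hx, rfl⟩
    rw [h, Submodule.mem_bot] at this
    have : f x = f 0 := by rw [this, map_zero]
    simpa using hf this
  · intro h; rw [h, Submodule.map_bot]

end MainLemma

section Structural

variable {Q : Type*} [Ring Q]

set_option maxHeartbeats 2000000 in
theorem mainStructural (c : Q) (hc : IsIdempotentElem c)
    (hcomm : ∀ x : Q, c * x = x * c)
    (hss : IsSemisimpleModule Q ↥(smulFix c hcomm : Submodule Q Q))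
    (hsf : IsSquareFreeModule Q ↥(smulKill c hcomm : Submodule Q Q)) :
    IsStronglyC4StarModule Q Q := by
  have hIcompl : IsCompl (smulFix c hcomm : Submodule Q Q) (smulKill c hcomm) :=
    isCompl_smulFix_smulKill hc hcomm
  constructor
  · -- Semi-weak-CS
    intro C _
    -- every SW-triple lives in the semisimple part
    have htriple : ∀ t : SWTriple Q Q, t.X ≤ smulFix c hcomm ∧ t.Y ≤ smulFix c hcomm := by
      intro t
      set P₁ := t.X ⊓ (smulKill c hcomm : Submodule Q Q) with hP₁
      set P₂ := t.Y ⊓ (smulKill c hcomm : Submodule Q Q) with hP₂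
      have hf2 : ∀ x : ↥t.X, (x : Q) ∈ (smulKill c hcomm : Submodule Q Q) →
          ((t.f x : Q)) ∈ (smulKill c hcomm : Submodule Q Q) := by
        intro x hx
        show c • (t.f x : Q) = 0
        have hcx : c • x = (0 : ↥t.X) := Subtype.ext (by
          show c • (x : Q) = 0
          exact hx)
        rw [← Submodule.coe_smul, ← map_smul, hcx, map_zero, Submodule.coe_zero]
      have hf2' : ∀ y : ↥t.Y, (y : Q) ∈ (smulKill c hcomm : Submodule Q Q) →
          ((t.f.symm y : Q)) ∈ (smulKill c hcomm : Submodule Q Q) := by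
        intro y hy
        show c • (t.f.symm y : Q) = 0
        have hcy : c • y = (0 : ↥t.Y) := Subtype.ext (by
          show c • (y : Q) = 0
          exact hy)
        rw [← Submodule.coe_smul, ← map_smul, hcy, map_zero, Submodule.coe_zero]
      let φ : ↥P₁ →ₗ[Q] ↥P₂ :=
        { toFun := fun x => ⟨(t.f ⟨x.1, x.2.1⟩ : Q),
            ⟨(t.f ⟨x.1, x.2.1⟩).2, hf2 ⟨x.1, x.2.1⟩ x.2.2⟩⟩
          map_add' := fun x y => Subtype.ext (by
            have h1 : (⟨(x + y).1, (x + y).2.1⟩ : ↥t.X)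
                = ⟨x.1, x.2.1⟩ + ⟨y.1, y.2.1⟩ := Subtype.ext rfl
            show (t.f ⟨(x + y).1, (x + y).2.1⟩ : Q) = _
            rw [h1, map_add, Submodule.coe_add]
            rfl)
          map_smul' := fun q x => Subtype.ext (by
            have h1 : (⟨(q • x).1, (q • x).2.1⟩ : ↥t.X) = q • ⟨x.1, x.2.1⟩ :=
              Subtype.ext rfl
            show (t.f ⟨(q • x).1, (q • x).2.1⟩ : Q) = _
            rw [h1, map_smul, Submodule.coe_smul]
            rfl) }
      have hinj : Function.Injective φ := by
        intro a b hab
        have h1 := Subtype.ext_iff.mp hab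
        have h2 : t.f ⟨a.1, a.2.1⟩ = t.f ⟨b.1, b.2.1⟩ := Subtype.ext h1
        have h3 := t.f.injective h2
        have h4 : ((⟨(a : Q), a.2.1⟩ : ↥t.X) : Q) = ((⟨(b : Q), b.2.1⟩ : ↥t.X) : Q) :=
          congrArg Subtype.val h3
        exact Subtype.ext h4
      have hsurj : Function.Surjective φ := by
        intro y
        set x := t.f.symm ⟨y.1, y.2.1⟩ with hx
        have hxI₂ : (x : Q) ∈ (smulKill c hcomm : Submodule Q Q) :=
          hf2' ⟨y.1, y.2.1⟩ y.2.2
        refine ⟨⟨x.1, ⟨x.2, hxI₂⟩⟩, Subtype.ext ?_⟩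
        show (t.f ⟨x.1, x.2⟩ : Q) = y.1
        have : (⟨x.1, x.2⟩ : ↥t.X) = x := Subtype.ext rfl
        rw [this, hx, t.f.apply_symm_apply]
      have e := LinearEquiv.ofBijective φ ⟨hinj, hsurj⟩
      have hdisj : P₁ ⊓ P₂ = ⊥ := by
        rw [eq_bot_iff, ← t.disj]
        exact le_trans (inf_le_inf inf_le_left inf_le_left) (le_refl _)
      obtain ⟨h1, h2⟩ := flat_squareFree hsf inf_le_right inf_le_right hdisj e
      constructor
      · intro x hx
        have hmem : x - c • x ∈ P₁ := by
          rw [hP₁]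
          refine Submodule.mem_inf.mpr ⟨t.X.sub_mem hx (t.X.smul_mem c hx), ?_⟩
          show c • (x - c • x) = 0
          rw [smul_sub, smul_smul, hc, sub_self]
        rw [hP₁] at hmem
        rw [h1, Submodule.mem_bot, sub_eq_zero] at hmem
        show c • x = x
        exact hmem.symm
      · intro y hy
        have hmem : y - c • y ∈ P₂ := by
          rw [hP₂]
          refine Submodule.mem_inf.mpr ⟨t.Y.sub_mem hy (t.Y.smul_mem c hy), ?_⟩
          show c • (y - c • y) = 0
          rw [smul_sub, smul_smul, hc, sub_self]
        rw [hP₂] at hmem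
        rw [h2, Submodule.mem_bot, sub_eq_zero] at hmem
        show c • y = y
        exact hmem.symm
    have hXle : (⨆ t ∈ C, t.X) ≤ smulFix c hcomm := by
      refine iSup₂_le fun t _ => (htriple t).1
    have hYle : (⨆ t ∈ C, t.Y) ≤ smulFix c hcomm := by
      refine iSup₂_le fun t _ => (htriple t).2
    obtain ⟨WX, hWX1, hWX2⟩ := summand_of_le_semisimple hXle hss
    obtain ⟨WY, hWY1, hWY2⟩ := summand_of_le_semisimple hYle hss
    refine ⟨⨆ t ∈ C, t.X, ⨆ t ∈ C, t.Y,
      ⟨_, isCompl_extend hIcompl hWX1 hWX2⟩,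
      ⟨_, isCompl_extend hIcompl hWY1 hWY2⟩,
      ⟨le_refl _, ?_⟩, ⟨le_refl _, ?_⟩⟩
    · intro P hP hP0
      rw [inf_eq_right.mpr hP]
      exact hP0
    · intro P hP hP0
      rw [inf_eq_right.mpr hP]
      exact hP0
  · -- C4*
    intro N A B hAB f hker
    obtain ⟨K, hK⟩ := hker
    have hJcompl : IsCompl (smulFix c hcomm : Submodule Q ↥B) (smulKill c hcomm) :=
      isCompl_smulFix_smulKill hc hcomm
    let φ : ↥(K ⊓ (smulKill c hcomm : Submodule Q ↥A)) →ₗ[Q] ↥(LinearMap.range f ⊓ (smulKill c hcomm : Submodule Q ↥B)) :=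
      { toFun := fun k => ⟨f k.1, ⟨⟨k.1, rfl⟩, by
          show c • f k.1 = 0
          rw [← map_smul, (k.2.2 : c • k.1 = 0), map_zero]⟩⟩
        map_add' := fun x y => Subtype.ext (by
          show f (x.1 + y.1) = f x.1 + f y.1
          rw [map_add])
        map_smul' := fun q x => Subtype.ext (by
          show f (q • x.1) = q • f x.1
          rw [map_smul]) }
    have hinj : Function.Injective φ := by
      intro a b hab
      have h1 : f a.1 = f b.1 := congrArg Subtype.val hab
      have h2 : a.1 - b.1 ∈ LinearMap.ker f ⊓ K :=
        Submodule.mem_inf.mpr ⟨by rw [LinearMap.mem_ker, map_sub, h1, sub_self],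
          K.sub_mem a.2.1 b.2.1⟩
      rw [hK.disjoint.eq_bot, Submodule.mem_bot, sub_eq_zero] at h2
      exact Subtype.ext h2
    have hsurj : Function.Surjective φ := by
      intro y
      obtain ⟨a, ha⟩ := y.2.1
      have hatop : a ∈ LinearMap.ker f ⊔ K := by
        rw [hK.codisjoint.eq_top]; trivial
      obtain ⟨a₀, ha₀, a₁, ha₁, haa⟩ := Submodule.mem_sup.mp hatop
      have hfa₁ : f a₁ = y.1 := by
        have : f a = f a₀ + f a₁ := by rw [← map_add, haa]
        rw [LinearMap.mem_ker.mp ha₀, zero_add] at this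
        rw [← this, ha]
      have hca₁ : c • a₁ = 0 := by
        have h3 : c • a₁ ∈ LinearMap.ker f ⊓ K :=
          Submodule.mem_inf.mpr ⟨by rw [LinearMap.mem_ker, map_smul, hfa₁,
            (y.2.2 : c • y.1 = 0)], K.smul_mem c ha₁⟩
        rw [hK.disjoint.eq_bot, Submodule.mem_bot] at h3
        exact h3
      exact ⟨⟨a₁, ⟨ha₁, hca₁⟩⟩, Subtype.ext (by show f a₁ = y.1; exact hfa₁)⟩
    have e := LinearEquiv.ofBijective φ ⟨hinj, hsurj⟩
    -- flatten to Q
    have injA : Function.Injective A.subtype := Submodule.injective_subtype A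
    have injB : Function.Injective B.subtype := Submodule.injective_subtype B
    have injN : Function.Injective N.subtype := Submodule.injective_subtype N
    have eK : ↥(K ⊓ (smulKill c hcomm : Submodule Q ↥A)) ≃ₗ[Q] ↥(((K ⊓ (smulKill c hcomm : Submodule Q ↥A)).map A.subtype).map N.subtype) :=
      (Submodule.equivMapOfInjective A.subtype injA (K ⊓ (smulKill c hcomm : Submodule Q ↥A))).trans
        (Submodule.equivMapOfInjective N.subtype injN _)
    have eR : ↥(LinearMap.range f ⊓ (smulKill c hcomm : Submodule Q ↥B)) ≃ₗ[Q] ↥(((LinearMap.range f ⊓ (smulKill c hcomm : Submodule Q ↥B)).map B.subtype).map N.subtype) :=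
      (Submodule.equivMapOfInjective B.subtype injB (LinearMap.range f ⊓ (smulKill c hcomm : Submodule Q ↥B))).trans
        (Submodule.equivMapOfInjective N.subtype injN _)
    have e' := eK.symm.trans (e.trans eR)
    have hle1 : ((K ⊓ (smulKill c hcomm : Submodule Q ↥A)).map A.subtype).map N.subtype ≤ (smulKill c hcomm : Submodule Q Q) := by
      rintro x ⟨y, ⟨a, ha, rfl⟩, rfl⟩
      show c • ((a : ↥N) : Q) = 0
      have h0 : c • a = (0 : ↥A) := ha.2
      rw [← Submodule.coe_smul, ← Submodule.coe_smul, h0]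
      simp
    have hle2 : ((LinearMap.range f ⊓ (smulKill c hcomm : Submodule Q ↥B)).map B.subtype).map N.subtype ≤ (smulKill c hcomm : Submodule Q Q) := by
      rintro x ⟨y, ⟨b, hb, rfl⟩, rfl⟩
      show c • ((b : ↥N) : Q) = 0
      have h0 : c • b = (0 : ↥B) := hb.2
      rw [← Submodule.coe_smul, ← Submodule.coe_smul, h0]
      simp
    have hdisjflat : ((K ⊓ (smulKill c hcomm : Submodule Q ↥A)).map A.subtype).map N.subtype ⊓ ((LinearMap.range f ⊓ (smulKill c hcomm : Submodule Q ↥B)).map B.subtype).map N.subtype = ⊥ := by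
      rw [eq_bot_iff]
      refine le_trans (inf_le_inf (Submodule.map_mono (Submodule.map_subtype_le A (K ⊓ (smulKill c hcomm : Submodule Q ↥A))))
        (Submodule.map_mono (Submodule.map_subtype_le B (LinearMap.range f ⊓ (smulKill c hcomm : Submodule Q ↥B))))) ?_
      rw [← Submodule.map_inf _ injN, hAB.disjoint.eq_bot, Submodule.map_bot]
    obtain ⟨_, h2⟩ := flat_squareFree hsf hle1 hle2 hdisjflat e'
    have hR₂ : LinearMap.range f ⊓ (smulKill c hcomm : Submodule Q ↥B) = ⊥ := by
      rw [map_eq_bot_iff_of_injective _ injN, map_eq_bot_iff_of_injective _ injB] at h2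
      exact h2
    have hRngle : LinearMap.range f ≤ (smulFix c hcomm : Submodule Q ↥B) := by
      rintro y ⟨a, rfl⟩
      show c • f a = f a
      have hmem : f a - c • f a ∈ LinearMap.range f ⊓ (smulKill c hcomm : Submodule Q ↥B) := by
        refine Submodule.mem_inf.mpr ⟨?_, ?_⟩
        · have : f a - c • f a = f (a - c • a) := by rw [map_sub, map_smul]
          rw [this]
          exact ⟨a - c • a, rfl⟩
        · show c • (f a - c • f a) = 0
          rw [smul_sub, smul_smul, hc, sub_self]
      rw [hR₂, Submodule.mem_bot, sub_eq_zero] at hmem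
      exact hmem.symm
    have hssJ : IsSemisimpleModule Q ↥(smulFix c hcomm : Submodule Q ↥B) := by
      refine semisimple_of_map_le (N.subtype.comp B.subtype)
        (injN.comp injB) (I := (smulFix c hcomm : Submodule Q Q)) ?_ hss
      rw [Submodule.map_comp]
      rintro x ⟨y, ⟨b, hb, rfl⟩, rfl⟩
      show c • ((b : ↥N) : Q) = ((b : ↥N) : Q)
      have h0 : c • b = b := hb
      rw [← Submodule.coe_smul, ← Submodule.coe_smul, h0]
    obtain ⟨W, hW1, hW2⟩ := summand_of_le_semisimple hRngle hssJ
    exact ⟨W ⊔ smulKill c hcomm, isCompl_extend hJcompl hW1 hW2⟩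

end Structural

section MatrixSemisimple

variable {S : Type*} [Ring S] {n : ℕ}

/-- The `j`-th column left ideal of a matrix ring. -/
def colSub (j : Fin n) : Submodule (Matrix (Fin n) (Fin n) S) (Matrix (Fin n) (Fin n) S) where
  carrier := {X | ∀ i k, k ≠ j → X i k = 0}
  add_mem' := fun {X Y} hX hY i k hk => by
    show X i k + Y i k = 0
    rw [hX i k hk, hY i k hk, add_zero]
  zero_mem' := fun i k _ => rfl
  smul_mem' := fun q X hX i k hk => by
    show (q * X) i k = 0
    rw [Matrix.mul_apply]
    exact Finset.sum_eq_zero fun m _ => by rw [hX m k hk, mul_zero]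

theorem colSub_isSemisimple [IsSemisimpleRing S] (hn : 1 ≤ n) (j : Fin n) :
    IsSemisimpleModule (Matrix (Fin n) (Fin n) S) ↥(colSub j : Submodule (Matrix (Fin n) (Fin n) S) (Matrix (Fin n) (Fin n) S)) := by
  set A := Matrix (Fin n) (Fin n) S
  have i₀ : Fin n := ⟨0, hn⟩
  -- the map from submodules of S to submodules of the column
  let Ψ : Submodule S S → Submodule A ↥(colSub j : Submodule A A) := fun W =>
    { carrier := {X | ∀ i, (X : A) i j ∈ W}
      add_mem' := fun {X Y} hX hY i => by
        show (X : A) i j + (Y : A) i j ∈ W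
        exact W.add_mem (hX i) (hY i)
      zero_mem' := fun i => W.zero_mem
      smul_mem' := fun q X hX i => by
        show ((q * (X : A))) i j ∈ W
        rw [Matrix.mul_apply]
        exact Submodule.sum_mem W fun m _ => W.smul_mem (q i m) (hX m) }
  -- every submodule of the column is of the form Ψ W
  have key : ∀ V : Submodule A ↥(colSub j : Submodule A A), ∃ W : Submodule S S, Ψ W = V := by
    intro V
    refine ⟨{ carrier := (fun X : ↥(colSub j : Submodule A A) => (X : A) i₀ j) '' V
              add_mem' := ?_
              zero_mem' := ⟨0, V.zero_mem, rfl⟩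
              smul_mem' := ?_ }, ?_⟩
    · rintro _ _ ⟨X, hX, rfl⟩ ⟨Y, hY, rfl⟩
      exact ⟨X + Y, V.add_mem hX hY, rfl⟩
    · rintro s _ ⟨X, hX, rfl⟩
      refine ⟨(Matrix.single i₀ i₀ s : A) • X, V.smul_mem _ hX, ?_⟩
      show ((Matrix.single i₀ i₀ s : A) * (X : A)) i₀ j = s • (X : A) i₀ j
      rw [Matrix.single_mul_apply_same, smul_eq_mul]
    · apply le_antisymm
      · -- Ψ W ≤ V
        intro X hX
        choose Y hYV hYe using hX
        have hXsum : X = ∑ i : Fin n, (Matrix.single i i₀ (1 : S) : A) • Y i := by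
          apply Subtype.ext
          ext a b
          rw [Submodule.coe_sum]
          rw [Matrix.sum_apply]
          have hterm : ∀ i : Fin n,
              (((Matrix.single i i₀ (1 : S) : A) • Y i : ↥(colSub j : Submodule A A)) : A) a b
              = if a = i then (Y i : A) i₀ b else 0 := by
            intro i
            show ((Matrix.single i i₀ (1 : S) : A) * (Y i : A)) a b = _
            by_cases hai : a = i
            · subst hai
              rw [Matrix.single_mul_apply_same, one_mul, if_pos rfl]
            · rw [Matrix.single_mul_apply_of_ne _ _ _ _ _ hai, if_neg hai]
          calc (X : A) a b = if a ∈ Finset.univ then (if b = j then (X : A) a b else 0)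
                  + (if b = j then 0 else (X : A) a b) else 0 := by
                rw [if_pos (Finset.mem_univ a)]
                by_cases hb : b = j <;> simp [hb]
            _ = ∑ i : Fin n, (((Matrix.single i i₀ (1 : S) : A) • Y i :
                  ↥(colSub j : Submodule A A)) : A) a b := by
                rw [Finset.sum_congr rfl fun i _ => hterm i]
                rw [Finset.sum_ite_eq Finset.univ a (fun i => (Y i : A) i₀ b)]
                rw [if_pos (Finset.mem_univ a), if_pos (Finset.mem_univ a)]
                by_cases hb : b = j
                · rw [if_pos hb, if_pos hb, add_zero, hb]
                  exact (hYe a).symm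
                · rw [if_neg hb, if_neg hb, X.2 a b hb, (Y a).2 i₀ b hb, add_zero]
        rw [hXsum]
        exact Submodule.sum_mem V fun i _ => V.smul_mem _ (hYV i)
      · -- V ≤ Ψ W
        intro X hX i
        refine ⟨(Matrix.single i₀ i (1 : S) : A) • X, V.smul_mem _ hX, ?_⟩
        show ((Matrix.single i₀ i (1 : S) : A) * (X : A)) i₀ j = (X : A) i j
        rw [Matrix.single_mul_apply_same, one_mul]
  refine { toComplementedLattice := ⟨?_⟩ }
  intro V
  obtain ⟨W, rfl⟩ := key V
  obtain ⟨W', hW'⟩ := exists_isCompl W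
  refine ⟨Ψ W', ?_, ?_⟩
  · rw [disjoint_iff, eq_bot_iff]
    rintro X ⟨h1, h2⟩
    simp only [Submodule.mem_bot]
    apply Subtype.ext
    ext a b
    by_cases hb : b = j
    · have hmem : (X : A) a j ∈ W ⊓ W' := Submodule.mem_inf.mpr ⟨h1 a, h2 a⟩
      rw [hW'.disjoint.eq_bot, Submodule.mem_bot] at hmem
      show (X : A) a b = ((0 : ↥(colSub j : Submodule A A)) : A) a b
      rw [hb, hmem]
      rfl
    · show (X : A) a b = ((0 : ↥(colSub j : Submodule A A)) : A) a b
      rw [X.2 a b hb]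
      rfl
  · rw [codisjoint_iff, eq_top_iff]
    intro X _
    have hdec : ∀ i : Fin n, ∃ w ∈ W, ∃ w' ∈ W', w + w' = (X : A) i j := by
      intro i
      have : ((X : A) i j) ∈ W ⊔ W' := by rw [hW'.codisjoint.eq_top]; trivial
      exact Submodule.mem_sup.mp this
    choose w hw w' hw' hww using hdec
    have hXw : (Matrix.of fun i k => if k = j then w i else 0 : A) ∈ colSub j := by
      intro i k hk
      show (if k = j then w i else 0) = 0
      rw [if_neg hk]
    have hXw' : (Matrix.of fun i k => if k = j then w' i else 0 : A) ∈ colSub j := by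
      intro i k hk
      show (if k = j then w' i else 0) = 0
      rw [if_neg hk]
    refine Submodule.mem_sup.mpr ⟨⟨_, hXw⟩, fun i => ?_, ⟨_, hXw'⟩, fun i => ?_, ?_⟩
    · show (if j = j then w i else 0) ∈ W
      rw [if_pos rfl]; exact hw i
    · show (if j = j then w' i else 0) ∈ W'
      rw [if_pos rfl]; exact hw' i
    · apply Subtype.ext
      ext a b
      show (if b = j then w a else 0) + (if b = j then w' a else 0) = (X : A) a b
      by_cases hb : b = j
      · subst hb; rw [if_pos rfl, if_pos rfl, hww a]
      · rw [if_neg hb, if_neg hb, add_zero]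
        exact (X.2 a b hb).symm

theorem matrix_isSemisimpleRing [IsSemisimpleRing S] (hn : 1 ≤ n) :
    IsSemisimpleRing (Matrix (Fin n) (Fin n) S) := by
  apply isSemisimpleModule_of_isSemisimpleModule_submodule' (p := fun j => colSub j)
    (colSub_isSemisimple hn)
  rw [eq_top_iff]
  intro X _
  have : X = ∑ j : Fin n, (Matrix.of fun i k => if k = j then X i k else 0 :
      Matrix (Fin n) (Fin n) S) := by
    ext a b
    rw [Matrix.sum_apply]
    have : ∀ j : Fin n, (Matrix.of fun i k => if k = j then X i k else 0 :
        Matrix (Fin n) (Fin n) S) a b = if b = j then X a b else 0 := fun j => rfl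
    rw [Finset.sum_congr rfl fun j _ => this j, Finset.sum_ite_eq Finset.univ b
      (fun _ => X a b), if_pos (Finset.mem_univ b)]
  rw [this]
  refine Submodule.sum_mem _ fun j _ => Submodule.mem_iSup_of_mem j fun i k hk => ?_
  show (if k = j then X i k else 0) = 0
  rw [if_neg hk]

end MatrixSemisimple

section CornerEquiv

variable {T : Type*} [Ring T]

/-- The corner ring at the idempotent `1` is the whole ring. -/
def cornerOneEquiv : T ≃+* Corner (1 : T) IsIdempotentElem.one where
  toFun x := ⟨x, one_mul x, mul_one x⟩
  invFun x := x.1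
  left_inv x := rfl
  right_inv x := Subtype.ext rfl
  map_mul' x y := Subtype.ext rfl
  map_add' x y := Subtype.ext rfl

end CornerEquiv

section CornerTransfer

variable {T : Type*} [Ring T]

theorem squareFree_of_ssf_hst (hssf : IsSummandSquareFree Tᵐᵒᵖ T) (hhst : HST T) :
    IsSquareFreeModule T T := by
  -- transport summand-square-freeness to the corner at 1
  let σA : (Corner (1 : T) IsIdempotentElem.one)ᵐᵒᵖ →+* Tᵐᵒᵖ :=
    (RingEquiv.op (cornerOneEquiv (T := T)).symm).toRingHom
  have surjA : Function.Surjective σA := (RingEquiv.op (cornerOneEquiv (T := T)).symm).surjective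
  let dataA : SLD σA ↥(rightPart (1 : T)) T :=
    { g := { toFun := fun x => x.1
             invFun := fun t => ⟨t, mul_one t⟩
             left_inv := fun x => Subtype.ext rfl
             right_inv := fun t => rfl
             map_add' := fun x y => rfl }
      hg := fun q m => rfl }
  have hA : IsSummandSquareFree (Corner (1 : T) IsIdempotentElem.one)ᵐᵒᵖ
      ↥(rightPart (1 : T)) := dataA.summandSquareFree surjA hssf
  have hB := hhst 1 IsIdempotentElem.one hA
  -- transport square-freeness back from the corner
  let σB : T →+* Corner (1 : T) IsIdempotentElem.one := (cornerOneEquiv (T := T)).toRingHom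
  have surjB : Function.Surjective σB := (cornerOneEquiv (T := T)).surjective
  let dataB : SLD σB T ↥(leftPart (1 : T)) :=
    { g := { toFun := fun t => ⟨t, one_mul t⟩
             invFun := fun x => x.1
             left_inv := fun t => rfl
             right_inv := fun x => Subtype.ext rfl
             map_add' := fun x y => Subtype.ext rfl }
      hg := fun q m => Subtype.ext rfl }
  exact dataB.squareFree surjB hB

end CornerTransfer
/-- Let `R` be a strongly right `C4*`-ring with a right-to-left symmetry datum
`R ≅ S × T`, and fix `n ≥ 1`. If the matrix ring `Mₙ(T)` has summand-square-free right
regular module and satisfies `HST` and `CSA`, then `Mₙ(R)` is a strongly left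
`C4*`-ring. -/
theorem matrix_transfer {R S T : Type*} [Ring R] [Ring S] [Ring T]
    (h : IsStronglyRightC4StarRing R)
    (d : RightToLeftSymmetryDatum R S T)
    (n : ℕ) (hn : 1 ≤ n)
    (hssf : IsSummandSquareFree (Matrix (Fin n) (Fin n) T)ᵐᵒᵖ (Matrix (Fin n) (Fin n) T))
    (hhst : HST (Matrix (Fin n) (Fin n) T))
    (hcsa : CSAxiom (Matrix (Fin n) (Fin n) T)) :
    IsStronglyLeftC4StarRing (Matrix (Fin n) (Fin n) R) := by
  classical
  -- square-freeness of the left regular module of `Mₙ(T)`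
  have hsfT' : IsSquareFreeModule (Matrix (Fin n) (Fin n) T) (Matrix (Fin n) (Fin n) T) :=
    squareFree_of_ssf_hst hssf hhst
  -- semisimplicity of `Mₙ(S)`
  have hssS' : IsSemisimpleRing (Matrix (Fin n) (Fin n) S) :=
    letI := d.semisimpleArtinian
    matrix_isSemisimpleRing hn
  -- the central idempotent
  set ε : R := d.iso.symm (1, 0) with hεdef
  have hiso : d.iso ε = (1, 0) := d.iso.apply_symm_apply _
  have hεcomm : ∀ r : R, ε * r = r * ε := by
    intro r
    apply d.iso.injective
    rw [map_mul, map_mul, hiso]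
    exact Prod.ext (by simp) (by simp)
  have hεidem : ε * ε = ε := by
    apply d.iso.injective
    rw [map_mul, hiso]
    exact Prod.ext (by simp) (by simp)
  set c : Matrix (Fin n) (Fin n) R := Matrix.diagonal (fun _ => ε) with hcdef
  have hc : IsIdempotentElem c := by
    show c * c = c
    rw [hcdef, Matrix.diagonal_mul_diagonal]
    exact congrArg Matrix.diagonal (funext fun _ => hεidem)
  have hcomm : ∀ X : Matrix (Fin n) (Fin n) R, c * X = X * c := by
    intro X
    ext i j
    rw [hcdef, Matrix.diagonal_mul, Matrix.mul_diagonal, hεcomm]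
  have hcmul : ∀ (X : Matrix (Fin n) (Fin n) R) (i j : Fin n), (c * X) i j = ε * X i j := by
    intro X i j
    rw [hcdef, Matrix.diagonal_mul]
  -- ring homs to the factors
  set πS : R →+* S := (RingHom.fst S T).comp (d.iso : R →+* S × T) with hπS
  set πT : R →+* T := (RingHom.snd S T).comp (d.iso : R →+* S × T) with hπT
  have hπSapp : ∀ r : R, πS r = (d.iso r).1 := fun r => rfl
  have hπTapp : ∀ r : R, πT r = (d.iso r).2 := fun r => rfl
  -- semisimplicity of the `I₁` part
  have hss : IsSemisimpleModule (Matrix (Fin n) (Fin n) R)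
      ↥(smulFix c hcomm : Submodule (Matrix (Fin n) (Fin n) R) (Matrix (Fin n) (Fin n) R)) := by
    have surjS : Function.Surjective (πS.mapMatrix :
        Matrix (Fin n) (Fin n) R →+* Matrix (Fin n) (Fin n) S) := by
      intro M
      refine ⟨M.map (fun s => d.iso.symm (s, 0)), ?_⟩
      ext i j
      rw [RingHom.mapMatrix_apply, Matrix.map_apply, Matrix.map_apply, hπSapp,
        d.iso.apply_symm_apply]
    let dataS : SLD (πS.mapMatrix : Matrix (Fin n) (Fin n) R →+* Matrix (Fin n) (Fin n) S)
        ↥(smulFix c hcomm : Submodule (Matrix (Fin n) (Fin n) R) (Matrix (Fin n) (Fin n) R))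
        (Matrix (Fin n) (Fin n) S) :=
      { g := { toFun := fun X => (X : Matrix (Fin n) (Fin n) R).map πS
               invFun := fun M => ⟨M.map (fun s => d.iso.symm (s, 0)), by
                 show c • M.map (fun s => d.iso.symm (s, 0)) = M.map (fun s => d.iso.symm (s, 0))
                 show c * M.map (fun s => d.iso.symm (s, 0)) = M.map (fun s => d.iso.symm (s, 0))
                 ext i j
                 rw [hcmul, Matrix.map_apply]
                 apply d.iso.injective
                 rw [map_mul, hiso, d.iso.apply_symm_apply]
                 exact Prod.ext (by simp) (by simp)⟩
               left_inv := fun X => by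
                 apply Subtype.ext
                 have hX : c * (X : Matrix (Fin n) (Fin n) R) = X := X.2
                 ext i j
                 show (((X : Matrix (Fin n) (Fin n) R).map πS).map
                   (fun s => d.iso.symm (s, 0))) i j = (X : Matrix (Fin n) (Fin n) R) i j
                 rw [Matrix.map_apply, Matrix.map_apply, hπSapp]
                 have hε : ε * (X : Matrix (Fin n) (Fin n) R) i j
                     = (X : Matrix (Fin n) (Fin n) R) i j := by
                   have h5 := congrFun (congrFun hX i) j
                   rwa [hcmul] at h5
                 have h3 : d.iso ((X : Matrix (Fin n) (Fin n) R) i j)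
                     = ((d.iso ((X : Matrix (Fin n) (Fin n) R) i j)).1, 0) := by
                   conv_lhs => rw [← hε]
                   rw [map_mul, hiso]
                   exact Prod.ext (by simp) (by simp)
                 rw [← h3, d.iso.symm_apply_apply]
               right_inv := fun M => by
                 ext i j
                 show ((M.map (fun s => d.iso.symm (s, 0))).map πS) i j = M i j
                 rw [Matrix.map_apply, Matrix.map_apply, hπSapp, d.iso.apply_symm_apply]
               map_add' := fun X Y => by
                 ext i j
                 show πS (((X : Matrix (Fin n) (Fin n) R) + Y) i j) = _
                 rw [Matrix.add_apply, map_add]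
                 rfl }
        hg := fun q X => by
          show ((q * (X : Matrix (Fin n) (Fin n) R)).map πS)
            = πS.mapMatrix q * ((X : Matrix (Fin n) (Fin n) R)).map πS
          rw [← RingHom.mapMatrix_apply, ← RingHom.mapMatrix_apply, map_mul] }
    exact dataS.semisimple surjS hssS'
  -- square-freeness of the `I₂` part
  have hsf : IsSquareFreeModule (Matrix (Fin n) (Fin n) R)
      ↥(smulKill c hcomm : Submodule (Matrix (Fin n) (Fin n) R) (Matrix (Fin n) (Fin n) R)) := by
    have surjT : Function.Surjective (πT.mapMatrix :
        Matrix (Fin n) (Fin n) R →+* Matrix (Fin n) (Fin n) T) := by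
      intro M
      refine ⟨M.map (fun t => d.iso.symm (0, t)), ?_⟩
      ext i j
      rw [RingHom.mapMatrix_apply, Matrix.map_apply, Matrix.map_apply, hπTapp,
        d.iso.apply_symm_apply]
    let dataT : SLD (πT.mapMatrix : Matrix (Fin n) (Fin n) R →+* Matrix (Fin n) (Fin n) T)
        ↥(smulKill c hcomm : Submodule (Matrix (Fin n) (Fin n) R) (Matrix (Fin n) (Fin n) R))
        (Matrix (Fin n) (Fin n) T) :=
      { g := { toFun := fun X => (X : Matrix (Fin n) (Fin n) R).map πT
               invFun := fun M => ⟨M.map (fun t => d.iso.symm (0, t)), by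
                 show c • M.map (fun t => d.iso.symm (0, t)) = 0
                 show c * M.map (fun t => d.iso.symm (0, t)) = 0
                 ext i j
                 rw [hcmul, Matrix.map_apply, Matrix.zero_apply]
                 apply d.iso.injective
                 rw [map_mul, hiso, map_zero, d.iso.apply_symm_apply]
                 exact Prod.ext (by simp) (by simp)⟩
               left_inv := fun X => by
                 apply Subtype.ext
                 have hX : c * (X : Matrix (Fin n) (Fin n) R) = 0 := X.2
                 ext i j
                 show (((X : Matrix (Fin n) (Fin n) R).map πT).map
                   (fun t => d.iso.symm (0, t))) i j = (X : Matrix (Fin n) (Fin n) R) i j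
                 rw [Matrix.map_apply, Matrix.map_apply, hπTapp]
                 have hε : ε * (X : Matrix (Fin n) (Fin n) R) i j = 0 := by
                   have h5 := congrFun (congrFun hX i) j
                   rwa [hcmul, Matrix.zero_apply] at h5
                 have h4 : (d.iso ((X : Matrix (Fin n) (Fin n) R) i j)).1 = 0 := by
                   have h5 : d.iso (ε * (X : Matrix (Fin n) (Fin n) R) i j) = 0 := by
                     rw [hε, map_zero]
                   rw [map_mul, hiso] at h5
                   have h6 := congrArg Prod.fst h5
                   simpa using h6
                 have h3 : d.iso ((X : Matrix (Fin n) (Fin n) R) i j)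
                     = (0, (d.iso ((X : Matrix (Fin n) (Fin n) R) i j)).2) :=
                   Prod.ext h4 rfl
                 rw [← h3, d.iso.symm_apply_apply]
               right_inv := fun M => by
                 ext i j
                 show ((M.map (fun t => d.iso.symm (0, t))).map πT) i j = M i j
                 rw [Matrix.map_apply, Matrix.map_apply, hπTapp, d.iso.apply_symm_apply]
               map_add' := fun X Y => by
                 ext i j
                 show πT (((X : Matrix (Fin n) (Fin n) R) + Y) i j) = _
                 rw [Matrix.add_apply, map_add]
                 rfl }
        hg := fun q X => by
          show ((q * (X : Matrix (Fin n) (Fin n) R)).map πT)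
            = πT.mapMatrix q * ((X : Matrix (Fin n) (Fin n) R)).map πT
          rw [← RingHom.mapMatrix_apply, ← RingHom.mapMatrix_apply, map_mul] }
    exact dataT.squareFree surjT hsfT'
  exact mainStructural c hc hcomm hss hsf
end
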